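/- With ε(q) = 2·Σ_{i=1}^{3} (1 − cos qᵢ), the inequality (2π)^{−3} ∫_{[−π,π]³} cos(q₁)·ε(q)^{−1} dq > 0 holds. -/

import Mathlib

open MeasureTheory Real

noncomputable section

/-- The cube `[-π,π]³` in `ℝ³`, a fundamental domain for the torus `𝕋³`. -/
def cube3 : Set (Fin 3 → ℝ) := Set.Icc (fun _ => -π) (fun _ => π)

/-- The dispersion relation of the discrete Laplacian on `ℤ³`. -/
def εD (q : Fin 3 → ℝ) : ℝ := 2 * ∑ i, (1 - Real.cos (q i))

namespace WatsonAux

lemma mem_cube3 {q : Fin 3 → ℝ} : q ∈ cube3 ↔ ∀ i, q i ∈ Set.Icc (-π) π := by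
  constructor
  · rintro ⟨h1, h2⟩ i; exact ⟨h1 i, h2 i⟩
  · intro h; exact ⟨fun i => (h i).1, fun i => (h i).2⟩

lemma measurableSet_cube3 : MeasurableSet cube3 := by unfold cube3; exact measurableSet_Icc

lemma cube3_compact : IsCompact cube3 := isCompact_Icc

lemma eps_nonneg (q : Fin 3 → ℝ) : 0 ≤ εD q := by
  have h : ∀ i ∈ Finset.univ, (0:ℝ) ≤ 1 - Real.cos (q i) := fun i _ => by
    linarith [Real.cos_le_one (q i)]
  have := Finset.sum_nonneg h
  unfold εD; linarith

lemma eps_cont : Continuous εD := by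
  unfold εD; fun_prop

lemma eps_eq_zero {q : Fin 3 → ℝ} (hq : q ∈ cube3) (h : εD q = 0) : q = 0 := by
  have hterm : ∀ i ∈ Finset.univ, (0:ℝ) ≤ 1 - Real.cos (q i) := fun i _ => by
    linarith [Real.cos_le_one (q i)]
  have hsum : ∑ i, (1 - Real.cos (q i)) = 0 := by unfold εD at h; linarith
  have hzero := (Finset.sum_eq_zero_iff_of_nonneg hterm).1 hsum
  funext i
  have hi := mem_cube3.1 hq i
  have hcos : Real.cos (q i) = 1 := by have := hzero i (Finset.mem_univ i); linarith
  have hπ := Real.pi_pos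
  exact (Real.cos_eq_one_iff_of_lt_of_lt (by have := hi.1; linarith)
    (by have := hi.2; linarith)).1 hcos

lemma eps_pos {q : Fin 3 → ℝ} (hq : q ∈ cube3) (h0 : q ≠ 0) : 0 < εD q :=
  (eps_nonneg q).lt_of_ne (fun h => h0 (eps_eq_zero hq h.symm))

lemma ae_ne_zero : ∀ᵐ q : Fin 3 → ℝ ∂(volume.restrict cube3), ∀ i, q i ≠ 0 := by
  have h : ∀ᵐ q : Fin 3 → ℝ ∂volume, ∀ i, q i ≠ 0 := by
    rw [MeasureTheory.ae_all_iff]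
    intro i
    rw [volume_pi]
    exact MeasureTheory.Measure.ae_eval_ne _ i 0
  exact ae_restrict_of_ae h

lemma ae_eps_ne : ∀ᵐ q : Fin 3 → ℝ ∂(volume.restrict cube3), εD q ≠ 0 := by
  filter_upwards [ae_restrict_mem measurableSet_cube3, ae_ne_zero] with q hq hne
  have h0 : q ≠ 0 := fun h => hne 0 (by rw [h]; rfl)
  exact (eps_pos hq h0).ne'

/-! ### Integrability of `(εD)⁻¹` on the cube -/

lemma oneD : IntegrableOn (fun x : ℝ => (x^2) ^ (-(1/3) : ℝ)) (Set.Icc (-π) π) := by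
  have hπ := Real.pi_pos
  have ptw : ∀ x : ℝ, 0 ≤ x → x ^ (-(2/3) : ℝ) = (x^2) ^ (-(1/3) : ℝ) := by
    intro x hx
    rw [← Real.rpow_natCast x 2, ← Real.rpow_mul hx]
    norm_num
  have hIoc : IntegrableOn (fun x : ℝ => (x^2) ^ (-(1/3) : ℝ)) (Set.Ioc 0 π) := by
    have hbase : IntegrableOn (fun x : ℝ => x ^ (-(2/3) : ℝ)) (Set.Ioc 0 π) :=
      (intervalIntegrable_iff_integrableOn_Ioc_of_le hπ.le).1
        (intervalIntegral.intervalIntegrable_rpow' (by norm_num))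
    exact hbase.congr_fun (fun x hx => ptw x hx.1.le) measurableSet_Ioc
  have hIcc : IntegrableOn (fun x : ℝ => (x^2) ^ (-(1/3) : ℝ)) (Set.Icc 0 π) := by
    rwa [integrableOn_Icc_iff_integrableOn_Ioc]
  have hneg : IntegrableOn (fun x : ℝ => (x^2) ^ (-(1/3) : ℝ)) (Set.Icc (-π) 0) := by
    rw [← (Measure.measurePreserving_neg (volume : Measure ℝ)).integrableOn_comp_preimage
        (Homeomorph.neg ℝ).measurableEmbedding]
    simp only [Function.comp_def, neg_sq, Set.neg_preimage, Set.neg_Icc, neg_neg, neg_zero]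
    exact hIcc
  have hsplit : Set.Icc (-π) π = Set.Icc (-π) 0 ∪ Set.Ioc 0 π := by
    rw [Set.Icc_union_Ioc_eq_Icc (by linarith) hπ.le]
  rw [hsplit]
  exact hneg.union hIoc

/-- The one-dimensional factor of the integrable majorant. -/
def Fmaj : ℝ → ℝ := (Set.Icc (-π) π).indicator (fun x => (x^2) ^ (-(1/3) : ℝ))

lemma Fmaj_integrable : Integrable Fmaj := by
  rw [Fmaj, integrable_indicator_iff measurableSet_Icc]
  exact oneD

lemma prod_Fmaj_integrable : Integrable (fun q : Fin 3 → ℝ => ∏ i, Fmaj (q i)) :=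
  Integrable.fintype_prod (fun _ => Fmaj_integrable)

lemma eps_lb {q : Fin 3 → ℝ} (hq : q ∈ cube3) : (4 / π^2) * ∑ i, (q i)^2 ≤ εD q := by
  rw [εD, Finset.mul_sum, Finset.mul_sum]
  refine Finset.sum_le_sum fun i _ => ?_
  have hi := mem_cube3.1 hq i
  have h := Real.cos_le_one_sub_mul_cos_sq (x := q i) (abs_le.2 ⟨by linarith [hi.1], hi.2⟩)
  have hπ := Real.pi_pos
  have h2 : (4 / π^2) * (q i)^2 = 2 * (2 / π^2 * (q i)^2) := by ring
  rw [h2]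
  linarith

lemma eps_inv_le {q : Fin 3 → ℝ} (hq : q ∈ cube3) (hne : ∀ i, q i ≠ 0) :
    (εD q)⁻¹ ≤ (π^2/12) * ∏ i, Fmaj (q i) := by
  have hπ := Real.pi_pos
  have hF : ∀ i, Fmaj (q i) = ((q i)^2) ^ (-(1/3) : ℝ) := fun i =>
    Set.indicator_of_mem (mem_cube3.1 hq i) _
  have hsq : ∀ i, (0:ℝ) < (q i)^2 := fun i => pow_two_pos_of_ne_zero (hne i)
  have hamgm := Real.geom_mean_le_arith_mean3_weighted (w₁ := 1/3) (w₂ := 1/3) (w₃ := 1/3)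
    (p₁ := (q 0)^2) (p₂ := (q 1)^2) (p₃ := (q 2)^2)
    (by norm_num) (by norm_num) (by norm_num)
    (hsq 0).le (hsq 1).le (hsq 2).le (by norm_num)
  set P : ℝ := ((q 0)^2) ^ ((1/3):ℝ) * ((q 1)^2) ^ ((1/3):ℝ) * ((q 2)^2) ^ ((1/3):ℝ) with hP
  have hPpos : 0 < P := by
    have h0 := Real.rpow_pos_of_pos (hsq 0) ((1:ℝ)/3)
    have h1 := Real.rpow_pos_of_pos (hsq 1) ((1:ℝ)/3)
    have h2 := Real.rpow_pos_of_pos (hsq 2) ((1:ℝ)/3)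
    exact mul_pos (mul_pos h0 h1) h2
  have hsum : (4 / π^2) * ∑ i, (q i)^2 ≤ εD q := eps_lb hq
  have hsum3 : ∑ i, (q i)^2 = (q 0)^2 + (q 1)^2 + (q 2)^2 := by
    simp [Fin.sum_univ_three]
  have hεP : (12 / π^2) * P ≤ εD q := by
    have : (12 / π^2) * P ≤ (4 / π^2) * ((q 0)^2 + (q 1)^2 + (q 2)^2) := by
      have h12 : (0:ℝ) ≤ 12 / π^2 := by positivity
      have h3 := mul_le_mul_of_nonneg_left hamgm h12
      have h4 : 12/π^2 * (1/3 * (q 0)^2 + 1/3 * (q 1)^2 + 1/3 * (q 2)^2)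
          = 4/π^2 * ((q 0)^2 + (q 1)^2 + (q 2)^2) := by ring
      linarith
    calc (12 / π^2) * P ≤ (4 / π^2) * ((q 0)^2 + (q 1)^2 + (q 2)^2) := this
      _ = (4 / π^2) * ∑ i, (q i)^2 := by rw [hsum3]
      _ ≤ εD q := hsum
  have hLHSpos : 0 < (12 / π^2) * P := by positivity
  have := inv_anti₀ hLHSpos hεP
  calc (εD q)⁻¹ ≤ ((12 / π^2) * P)⁻¹ := this
    _ = (π^2/12) * P⁻¹ := by
        rw [mul_inv]
        congr 1
        field_simp
    _ = (π^2/12) * ∏ i, Fmaj (q i) := by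
        congr 1
        rw [Fin.prod_univ_three, hF 0, hF 1, hF 2, hP]
        rw [Real.rpow_neg (hsq 0).le, Real.rpow_neg (hsq 1).le, Real.rpow_neg (hsq 2).le,
          mul_inv, mul_inv]

lemma integrable_inv_eps : IntegrableOn (fun q => (εD q)⁻¹) cube3 := by
  apply Integrable.mono' ((prod_Fmaj_integrable.const_mul (π^2/12)).integrableOn (s := cube3))
  · exact (eps_cont.measurable.inv).aestronglyMeasurable
  · filter_upwards [ae_restrict_mem measurableSet_cube3, ae_ne_zero] with q hq hne
    rw [Real.norm_eq_abs, abs_of_nonneg (inv_nonneg.2 (eps_nonneg q))]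
    exact eps_inv_le hq hne

lemma integrable_cos_mul (i : Fin 3) :
    IntegrableOn (fun q => Real.cos (q i) * (εD q)⁻¹) cube3 := by
  apply Integrable.mono' integrable_inv_eps
  · exact (((Real.continuous_cos.comp (continuous_apply i)).measurable).mul
      eps_cont.measurable.inv).aestronglyMeasurable
  · refine Filter.Eventually.of_forall fun q => ?_
    rw [Real.norm_eq_abs, abs_mul]
    calc |Real.cos (q i)| * |(εD q)⁻¹| ≤ 1 * |(εD q)⁻¹| := by
          apply mul_le_mul_of_nonneg_right (Real.abs_cos_le_one _) (abs_nonneg _)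
      _ = (εD q)⁻¹ := by rw [one_mul, abs_of_nonneg (inv_nonneg.2 (eps_nonneg q))]

/-! ### Exact values of elementary integrals over the cube -/

lemma prod_marginal (g : Fin 3 → ℝ → ℝ) :
    ∫ q in cube3, ∏ j, g j (q j) = ∏ j, ∫ x in Set.Icc (-π) π, g j x := by
  have h2 : ∀ q : Fin 3 → ℝ, cube3.indicator (fun q => ∏ j, g j (q j)) q
      = ∏ j, ((Set.Icc (-π) π).indicator (g j)) (q j) := by
    intro q
    by_cases hq : q ∈ cube3
    · rw [Set.indicator_of_mem hq]
      exact Finset.prod_congr rfl fun j _ => (Set.indicator_of_mem (mem_cube3.1 hq j) _).symm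
    · rw [Set.indicator_of_notMem hq]
      obtain ⟨j, hj⟩ : ∃ j, q j ∉ Set.Icc (-π) π := by
        by_contra h; push_neg at h; exact hq (mem_cube3.2 h)
      exact (Finset.prod_eq_zero (Finset.mem_univ j) (Set.indicator_of_notMem hj _)).symm
  rw [← integral_indicator measurableSet_cube3]
  simp_rw [h2]
  rw [volume_pi, MeasureTheory.integral_fintype_prod_eq_prod
    (f := fun j => (Set.Icc (-π) π).indicator (g j))]
  exact Finset.prod_congr rfl fun j _ => integral_indicator measurableSet_Icc

lemma integral_cos_Icc : ∫ x in Set.Icc (-π) π, Real.cos x = 0 := by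
  have hπ := Real.pi_pos
  have h1 : (∫ x in (-π)..π, Real.cos x) = ∫ x in Set.Ioc (-π) π, Real.cos x :=
    intervalIntegral.integral_of_le (by linarith)
  rw [MeasureTheory.integral_Icc_eq_integral_Ioc, ← h1]
  simp

lemma integral_cos_coord (i : Fin 3) : (∫ q in cube3, Real.cos (q i)) = 0 := by
  classical
  have h := prod_marginal (fun j => if j = i then Real.cos else fun _ => (1:ℝ))
  have hL : ∀ q : Fin 3 → ℝ, (∏ j, (if j = i then Real.cos else fun _ => (1:ℝ)) (q j))
      = Real.cos (q i) := by
    intro q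
    rw [Finset.prod_eq_single i]
    · simp
    · intro j _ hj; simp [hj]
    · simp
  simp_rw [hL] at h
  rw [h]
  apply Finset.prod_eq_zero (Finset.mem_univ i)
  simp [integral_cos_Icc]

lemma volume_cube3 : (volume cube3).toReal = (2*π)^3 := by
  have hπ := Real.pi_pos
  rw [cube3, Real.volume_Icc_pi_toReal (fun i => by linarith)]
  simp
  ring

lemma integral_one_cube3 : (∫ _ in cube3, (1:ℝ)) = (2*π)^3 := by
  rw [setIntegral_const, measureReal_def, volume_cube3, smul_eq_mul, mul_one]

lemma integral_eps : (∫ q in cube3, εD q) = 6 * (2*π)^3 := by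
  have hint : ∀ i : Fin 3, IntegrableOn (fun q : Fin 3 → ℝ => 1 - Real.cos (q i)) cube3 := by
    intro i
    exact (Continuous.integrableOn_Icc (by fun_prop))
  calc (∫ q in cube3, εD q) = 2 * ∑ i, ∫ q in cube3, (1 - Real.cos (q i)) := by
        simp only [εD]
        rw [integral_const_mul]
        rw [integral_finset_sum _ (fun i _ => hint i)]
    _ = 6 * (2*π)^3 := by
        have : ∀ i : Fin 3, (∫ q in cube3, (1 - Real.cos (q i))) = (2*π)^3 := by
          intro i
          have hci : IntegrableOn (fun q : Fin 3 → ℝ => Real.cos (q i)) cube3 :=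
            Continuous.integrableOn_Icc (by fun_prop)
          rw [integral_sub (integrableOn_const (C := (1:ℝ)) (cube3_compact.measure_lt_top.ne)) hci]
          rw [integral_one_cube3, integral_cos_coord, sub_zero]
        simp [this, Fin.sum_univ_three]
        ring

/-! ### Symmetry of the Watson integral under permutation of coordinates -/

lemma K_eq (i : Fin 3) :
    (∫ q in cube3, Real.cos (q i) * (εD q)⁻¹) = ∫ q in cube3, Real.cos (q 0) * (εD q)⁻¹ := by
  classical
  set e : Fin 3 ≃ Fin 3 := Equiv.swap 0 i with he
  set T : (Fin 3 → ℝ) ≃ᵐ (Fin 3 → ℝ) :=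
    MeasurableEquiv.arrowCongr' e (MeasurableEquiv.refl ℝ) with hT
  have hTmp : MeasurePreserving T := by
    apply MeasureTheory.volume_preserving_arrowCongr'
    exact MeasurePreserving.id _
  have happ : ∀ (q : Fin 3 → ℝ) (j : Fin 3), T q j = q (e.symm j) := by
    intro q j
    rfl
  have hpre : T ⁻¹' cube3 = cube3 := by
    ext q
    simp only [Set.mem_preimage]
    rw [mem_cube3, mem_cube3]
    constructor
    · intro h j
      have := h (e j)
      rwa [happ, Equiv.symm_apply_apply] at this
    · intro h j
      rw [happ]
      exact h _
  have key := hTmp.setIntegral_preimage_emb T.measurableEmbedding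
    (fun y => Real.cos (y 0) * (εD y)⁻¹) cube3
  rw [hpre] at key
  rw [← key]
  apply setIntegral_congr_fun measurableSet_cube3
  intro q _
  have hε : εD (T q) = εD q := by
    simp only [εD]
    congr 1
    simp_rw [happ]
    exact Equiv.sum_comp e.symm (fun j => 1 - Real.cos (q j))
  have h0 : T q 0 = q i := by
    rw [happ]
    simp [he]
  simp only [hε, h0]

end WatsonAux

open WatsonAux

/-- the Watson integral `c = (2π)⁻³ ∫ cos(q₁) dq/ε(q)` is
positive. -/
theorem watson_integral_cos_pos :
    0 < ((2 * π) ^ 3)⁻¹ * ∫ q in cube3, Real.cos (q 0) * (εD q)⁻¹ := by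
  have hπ := Real.pi_pos
  set K := ∫ q in cube3, Real.cos (q 0) * (εD q)⁻¹ with hK
  set J := ∫ q in cube3, (εD q)⁻¹ with hJ
  have step1 : (∫ q in cube3, (∑ i, Real.cos (q i)) * (εD q)⁻¹) = 3 * K := by
    simp_rw [Finset.sum_mul]
    rw [integral_finset_sum _ (fun i _ => integrable_cos_mul i), Fin.sum_univ_three,
      K_eq 0, K_eq 1, K_eq 2]
    ring
  have step2 : (∫ q in cube3, (∑ i, Real.cos (q i)) * (εD q)⁻¹)
      = ∫ q in cube3, (3 * (εD q)⁻¹ - 1/2) := by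
    apply integral_congr_ae
    filter_upwards [ae_eps_ne] with q hne
    have hsum : (∑ i, Real.cos (q i)) = 3 - εD q / 2 := by
      simp only [εD, Fin.sum_univ_three]
      ring
    rw [hsum]
    field_simp
  have step3 : (∫ q in cube3, (3 * (εD q)⁻¹ - 1/2)) = 3 * J - (1/2) * (2*π)^3 := by
    rw [integral_sub (integrable_inv_eps.const_mul 3) (integrableOn_const
      (cube3_compact.measure_lt_top.ne))]
    rw [integral_const_mul, setIntegral_const, measureReal_def, volume_cube3, smul_eq_mul]
    ring
  have hKJ : K = J - (2*π)^3 / 6 := by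
    have := step1.symm.trans (step2.trans step3)
    linarith
  set h : (Fin 3 → ℝ) → ℝ := fun q => (εD q)⁻¹ - 1/3 + εD q / 36 with hh
  have hconst : IntegrableOn (fun _ : Fin 3 → ℝ => (1:ℝ)/3) cube3 :=
    integrableOn_const (cube3_compact.measure_lt_top.ne)
  have h_eps_int : IntegrableOn εD cube3 :=
    eps_cont.continuousOn.integrableOn_compact cube3_compact
  have ha : IntegrableOn (fun q : Fin 3 → ℝ => (εD q)⁻¹ - 1/3) cube3 :=
    integrable_inv_eps.sub hconst
  have h_int : IntegrableOn h cube3 := ha.add (h_eps_int.div_const 36)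
  have hint_eq : (∫ q in cube3, h q) = K := by
    rw [hh]
    rw [integral_add ha (h_eps_int.div_const 36)]
    rw [integral_sub integrable_inv_eps hconst]
    rw [integral_div, integral_div, integral_eps, integral_one_cube3, hKJ]
    ring
  have h_ae_nonneg : 0 ≤ᵐ[volume.restrict cube3] h := by
    filter_upwards [ae_restrict_mem measurableSet_cube3, ae_eps_ne] with q hq hne
    have hpos : 0 < εD q := (eps_nonneg q).lt_of_ne (Ne.symm hne)
    have hform : h q = (εD q - 6)^2 / (36 * εD q) := by
      rw [hh]
      field_simp
      ring
    rw [Pi.zero_apply, hform]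
    positivity
  have h_supp : 0 < volume (Function.support h ∩ cube3) := by
    set W : Set (Fin 3 → ℝ) := εD ⁻¹' (Set.Ioi 6) ∩ Set.pi Set.univ (fun _ => Set.Ioo (-π) π)
      with hW
    have hWopen : IsOpen W :=
      (eps_cont.isOpen_preimage _ isOpen_Ioi).inter
        (isOpen_set_pi Set.finite_univ (fun _ _ => isOpen_Ioo))
    have hp3 : (3:ℝ) < π := by
      have := Real.pi_gt_three
      linarith
    have hmem : (fun _ => (3:ℝ)) ∈ W := by
      constructor
      · simp only [Set.mem_preimage, Set.mem_Ioi, εD, Fin.sum_univ_three]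
        have hcos3 : Real.cos 3 < 0 := by
          have h1 : Real.cos 3 < Real.cos (π/2) := by
            apply Real.strictAntiOn_cos ⟨by linarith, by linarith⟩ ⟨by norm_num, hp3.le⟩
            have := Real.pi_lt_d2
            linarith
          rwa [Real.cos_pi_div_two] at h1
        nlinarith
      · intro i _
        constructor
        · show -π < (3:ℝ)
          linarith
        · show (3:ℝ) < π
          exact hp3
    have hWsub : W ⊆ Function.support h ∩ cube3 := by
      rintro q ⟨h6, hio⟩
      have h6' : (6:ℝ) < εD q := h6
      have hqpos : 0 < εD q := by linarith
      have hform : h q = (εD q - 6)^2 / (36 * εD q) := by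
        rw [hh]
        field_simp
        ring
      constructor
      · rw [Function.mem_support, hform]
        exact ne_of_gt (div_pos (pow_two_pos_of_ne_zero (by linarith)) (by linarith))
      · rw [mem_cube3]
        intro i
        have := hio i (Set.mem_univ i)
        exact ⟨this.1.le, this.2.le⟩
    calc (0:ENNReal) < volume W := hWopen.measure_pos volume ⟨_, hmem⟩
      _ ≤ volume (Function.support h ∩ cube3) := measure_mono hWsub
  have hpos : 0 < ∫ q in cube3, h q :=
    (setIntegral_pos_iff_support_of_nonneg_ae h_ae_nonneg h_int).2 h_supp
  rw [hint_eq] at hpos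
  exact mul_pos (inv_pos.2 (by positivity)) hpos
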